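/- For every integer k ≥ 1 there exists a (k+2, k) systematic single-error-correcting code, i.e., a code C ⊆ S_{k+2} of size k! such that for every σ ∈ S_k there is exactly one α ∈ C with α_{↓k} = σ, and distinct codewords of C have Kendall τ-distance at least 3. -/

import Mathlib

/-- `AdjTrans σ π` : the sequence `π` is obtained from the sequence `σ` by exchanging
two distinct adjacent elements (an adjacent transposition). -/
def AdjTrans (σ π : List ℤ) : Prop :=
  ∃ (l₁ l₂ : List ℤ) (a b : ℤ), a ≠ b ∧ σ = l₁ ++ a :: b :: l₂ ∧ π = l₁ ++ b :: a :: l₂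

/-- `StepsTo n σ π` : `π` can be obtained from `σ` by a sequence of `n` adjacent
transpositions. -/
def StepsTo : ℕ → List ℤ → List ℤ → Prop
  | 0 => fun σ π => σ = π
  | n + 1 => fun σ π => ∃ τ, AdjTrans σ τ ∧ StepsTo n τ π

/-- The Kendall τ-distance between two sequences: the minimum number of adjacent
transpositions needed to transform one into the other. -/
noncomputable def dK (σ π : List ℤ) : ℕ := sInf {n | StepsTo n σ π}

/-- The list `[a, a+1, ..., a+len-1]` of integers. -/
def rangeList (a len : ℕ) : List ℤ := (List.range' a len).map (fun x => (x : ℤ))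

/-- The substitution map `T_θ`: the `r`-th occurrence (from the left, `0`-indexed) of a
rank `a` in `σ` is replaced by the `r`-th entry of the list `θ a`. -/
def Tmap (θ : ℤ → List ℤ) (σ : List ℤ) : List ℤ :=
  (List.range σ.length).map (fun j =>
    (θ (σ.getD j 0)).getD ((σ.take j).count (σ.getD j 0)) 0)

/-- `psiEntry σ a s` : the number of positions in `σ` strictly to the right of the `s`-th
occurrence (`0`-indexed) of `a` in `σ` that hold an element smaller than `a`. -/
def psiEntry (σ : List ℤ) (a : ℤ) (s : ℕ) : ℕ :=
  (σ.drop (((σ.indexesOf a).getD s σ.length) + 1)).countP (fun x => decide (x < a))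

/-- The Manhattan distance between two vectors of naturals (presented as lists). -/
def manhattanL (x y : List ℕ) : ℕ :=
  ∑ i ∈ Finset.range (max x.length y.length), ((x.getD i 0 : ℤ) - (y.getD i 0 : ℤ)).natAbs

/-- The Lee distance over `Z_q` between two vectors with entries in `{0, …, q-1}`
(presented as lists). -/
def leeDistL (q : ℕ) (x y : List ℕ) : ℕ :=
  ∑ i ∈ Finset.range (max x.length y.length),
    min (((x.getD i 0 : ℤ) - (y.getD i 0 : ℤ)).natAbs)
      (q - ((x.getD i 0 : ℤ) - (y.getD i 0 : ℤ)).natAbs)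

/-- The Lee distance between two vectors over `ZMod q`. -/
def zmodLee {q N : ℕ} (x y : Fin N → ZMod q) : ℕ :=
  ∑ i, min (x i - y i).val (y i - x i).val

/-- `permList k σ` : `σ` is (an ordering representing) a permutation of `{1, …, k}`. -/
def permList (k : ℕ) (σ : List ℤ) : Prop :=
  (↑σ : Multiset ℤ) = (↑(rangeList 1 k) : Multiset ℤ)

/-- The multiset `M_{k,r} = {0^k, k+1, …, k+r}`. -/
def Mkr (k r : ℕ) : Multiset ℤ :=
  Multiset.replicate k (0 : ℤ) + (↑(rangeList (k + 1) r) : Multiset ℤ)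

/-- `α_{↓k}` : delete from `α` all elements larger than `k`. -/
def restrictTo (k : ℕ) (α : List ℤ) : List ℤ :=
  α.filter (fun x => decide (x ≤ (k : ℤ)))

/-- `α_{k↦0}` : replace in `α` every element of `{1, …, k}` by `0`. -/
def mapToZero (k : ℕ) (α : List ℤ) : List ℤ :=
  α.map (fun x => if 1 ≤ x ∧ x ≤ (k : ℤ) then 0 else x)

/-- `star σ ρ = σ ∗ ρ` : replace the zeros of `ρ`, from left to right, by the elements
of `σ` in order. -/
def starP : List ℤ → List ℤ → List ℤ
  | _, [] => []
  | σ, x :: ρ' => if x = 0 then σ.headD 0 :: starP σ.tail ρ' else x :: starP σ ρ'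

lemma rangeList_eq (a len : ℕ) :
    rangeList a len = List.map (fun x : ℕ => (x : ℤ)) (List.range' a len) := by
  simp [rangeList]
  induction (List.range' a len) with
  | nil => rfl
  | cons x l ih => simp [List.flatMap_cons, ih]

/-- inversion-table entry: sum over occurrences of `a` of the number of
later entries smaller than `a`. -/
def psi (a : ℤ) : List ℤ → ℕ
  | [] => 0
  | x :: xs => (if x = a then xs.countP (fun y => decide (y < a)) else 0) + psi a xs

lemma psi_append (a : ℤ) (l₁ l₂ : List ℤ) :
    psi a (l₁ ++ l₂) = psi a l₁ + l₁.count a * l₂.countP (fun y => decide (y < a)) + psi a l₂ := by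
  induction l₁ with
  | nil => simp [psi]
  | cons x l₁ ih =>
    by_cases hx : x = a <;>
      simp [psi, ih, List.countP_append, List.count_cons, hx] <;> ring

lemma psi_eq_zero_of_not_mem {a : ℤ} {l : List ℤ} (h : a ∉ l) : psi a l = 0 := by
  induction l with
  | nil => rfl
  | cons x xs ih =>
    simp only [List.mem_cons, not_or] at h
    simp [psi, Ne.symm h.1, ih h.2]

/-- inserting a larger element anywhere doesn't change `psi v`. -/
lemma psi_middle {v w : ℤ} (hvw : v < w) (l₁ l₂ : List ℤ) :
    psi v (l₁ ++ w :: l₂) = psi v (l₁ ++ l₂) := by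
  rw [psi_append, psi_append]
  have h1 : (List.countP (fun y => decide (y < v)) (w :: l₂)) =
      List.countP (fun y => decide (y < v)) l₂ := by
    simp [List.countP_cons, not_lt.2 hvw.le]
  have h2 : psi v (w :: l₂) = psi v l₂ := by
    simp [psi, hvw.ne']
  rw [h1, h2]

lemma psi_cons2 (a u v : ℤ) (l : List ℤ) :
    psi a (u :: v :: l) =
      (if u = a then (if v < a then 1 else 0) + l.countP (fun y => decide (y < a)) else 0)
      + (if v = a then l.countP (fun y => decide (y < a)) else 0) + psi a l := by
  simp [psi, List.countP_cons]
  by_cases h : u = a <;> by_cases h2 : v < a <;> simp [h, h2] <;> ring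

lemma adjTrans_psi_sum (A : Finset ℤ) {σ π : List ℤ} (h : AdjTrans σ π) :
    ∑ a ∈ A, ((psi a σ : ℤ) - (psi a π : ℤ)).natAbs ≤ 1 := by
  obtain ⟨l₁, l₂, u, v, huv, hσ, hπ⟩ := h
  subst hσ; subst hπ
  have key : ∀ a : ℤ, ((psi a (l₁ ++ u :: v :: l₂) : ℤ) - (psi a (l₁ ++ v :: u :: l₂) : ℤ)) =
      (if u = a then (if v < a then 1 else 0) else 0)
      - (if v = a then (if u < a then 1 else 0) else 0) := by
    intro a
    rw [psi_append, psi_append, psi_cons2, psi_cons2]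
    have hc : (List.countP (fun y => decide (y < a)) (u :: v :: l₂)) =
        List.countP (fun y => decide (y < a)) (v :: u :: l₂) := by
      simp [List.countP_cons]; ring
    rw [hc]
    push_cast
    by_cases h1 : u = a <;> by_cases h2 : v = a <;>
      simp [h1, h2] <;> by_cases h3 : v < a <;> by_cases h4 : u < a <;>
      simp_all <;> ring
  rcases lt_or_gt_of_ne huv with hlt | hlt
  · -- u < v : difference is -(indicator at v)
    calc ∑ a ∈ A, ((psi a (l₁ ++ u :: v :: l₂) : ℤ) - (psi a (l₁ ++ v :: u :: l₂) : ℤ)).natAbs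
        ≤ ∑ a ∈ A, (if a = v then 1 else 0) := by
          apply Finset.sum_le_sum
          intro a _
          rw [key a]
          by_cases h1 : u = a <;> by_cases h2 : v = a <;>
            simp [h1, h2] <;> split_ifs <;> simp_all <;> omega
      _ ≤ 1 := by rw [Finset.sum_ite_eq' A v (fun _ => 1)]; split_ifs <;> simp
  · calc ∑ a ∈ A, ((psi a (l₁ ++ u :: v :: l₂) : ℤ) - (psi a (l₁ ++ v :: u :: l₂) : ℤ)).natAbs
        ≤ ∑ a ∈ A, (if a = u then 1 else 0) := by
          apply Finset.sum_le_sum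
          intro a _
          rw [key a]
          by_cases h1 : u = a <;> by_cases h2 : v = a <;>
            simp [h1, h2] <;> split_ifs <;> simp_all <;> omega
      _ ≤ 1 := by rw [Finset.sum_ite_eq' A u (fun _ => 1)]; split_ifs <;> simp

lemma stepsTo_psi_sum (A : Finset ℤ) :
    ∀ (n : ℕ) (σ π : List ℤ), StepsTo n σ π →
      ∑ a ∈ A, ((psi a σ : ℤ) - (psi a π : ℤ)).natAbs ≤ n := by
  intro n
  induction n with
  | zero => intro σ π h; cases h; simp
  | succ n ih =>
    intro σ π h
    obtain ⟨τ, hadj, hrest⟩ := h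
    have h1 := adjTrans_psi_sum A hadj
    have h2 := ih τ π hrest
    calc ∑ a ∈ A, ((psi a σ : ℤ) - (psi a π : ℤ)).natAbs
        ≤ ∑ a ∈ A, (((psi a σ : ℤ) - (psi a τ : ℤ)).natAbs
            + ((psi a τ : ℤ) - (psi a π : ℤ)).natAbs) := by
          apply Finset.sum_le_sum
          intro a _
          have : (psi a σ : ℤ) - (psi a π : ℤ) =
              ((psi a σ : ℤ) - psi a τ) + ((psi a τ : ℤ) - psi a π) := by ring
          rw [this]; exact Int.natAbs_add_le _ _
      _ = (∑ a ∈ A, ((psi a σ : ℤ) - (psi a τ : ℤ)).natAbs)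
            + ∑ a ∈ A, ((psi a τ : ℤ) - (psi a π : ℤ)).natAbs := Finset.sum_add_distrib
      _ ≤ 1 + n := Nat.add_le_add h1 h2
      _ = n + 1 := by omega

lemma stepsTo_cons (y : ℤ) : ∀ {n : ℕ} {s t : List ℤ}, StepsTo n s t → StepsTo n (y :: s) (y :: t) := by
  intro n
  induction n with
  | zero => intro s t h; cases h; rfl
  | succ n ih =>
    intro s t h
    obtain ⟨τ, ⟨l₁, l₂, a, b, hab, h1, h2⟩, hrest⟩ := h
    exact ⟨y :: τ, ⟨y :: l₁, l₂, a, b, hab, by simp [h1], by simp [h2]⟩, ih hrest⟩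

lemma stepsTo_trans : ∀ {m n : ℕ} {a b c : List ℤ}, StepsTo m a b → StepsTo n b c →
    StepsTo (m + n) a c := by
  intro m
  induction m with
  | zero => intro n a b c h1 h2; cases h1; simpa using h2
  | succ m ih =>
    intro n a b c h1 h2
    obtain ⟨τ, hadj, hrest⟩ := h1
    have : m + 1 + n = (m + n) + 1 := by omega
    rw [this]
    exact ⟨τ, hadj, ih hrest h2⟩

lemma stepsTo_move_front (x : ℤ) : ∀ (l₁ l₂ : List ℤ), x ∉ l₁ →
    StepsTo l₁.length (l₁ ++ x :: l₂) (x :: (l₁ ++ l₂)) := by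
  intro l₁
  induction l₁ with
  | nil => intro l₂ _; rfl
  | cons y l₁ ih =>
    intro l₂ hx
    simp only [List.mem_cons, not_or] at hx
    have h1 : StepsTo l₁.length (y :: (l₁ ++ x :: l₂)) (y :: x :: (l₁ ++ l₂)) :=
      stepsTo_cons y (ih l₂ hx.2)
    have h2 : StepsTo 1 (y :: x :: (l₁ ++ l₂)) (x :: y :: (l₁ ++ l₂)) :=
      ⟨x :: y :: (l₁ ++ l₂), ⟨[], l₁ ++ l₂, y, x, fun h => hx.1 h.symm, rfl, rfl⟩, rfl⟩
    simpa using stepsTo_trans h1 h2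

lemma exists_stepsTo : ∀ (π σ : List ℤ), σ.Nodup → (↑σ : Multiset ℤ) = ↑π →
    ∃ n, StepsTo n σ π := by
  intro π
  induction π with
  | nil => intro σ _ hm; rw [Multiset.coe_nil, Multiset.coe_eq_zero] at hm; exact ⟨0, hm⟩
  | cons x π ih =>
    intro σ hnd hm
    have hx : x ∈ σ := by
      have : x ∈ (↑σ : Multiset ℤ) := by rw [hm]; simp
      simpa using this
    obtain ⟨s₁, s₂, rfl⟩ := List.append_of_mem hx
    have hx1 : x ∉ s₁ := by
      have := hnd
      simp only [List.nodup_append, List.nodup_cons] at this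
      intro hmem
      exact (this.2.2 x hmem x (by simp)) rfl
    have hmul : (↑(s₁ ++ s₂) : Multiset ℤ) = ↑π := by
      have h1 : (↑(s₁ ++ x :: s₂) : Multiset ℤ) = x ::ₘ ↑(s₁ ++ s₂) := by
        simp only [← Multiset.coe_add, ← Multiset.cons_coe]
        rw [add_comm]; simp [← Multiset.cons_coe, ← Multiset.coe_add, add_comm]
      rw [h1, ← Multiset.cons_coe x π] at hm
      exact (Multiset.cons_inj_right x).mp hm
    have hnd2 : (s₁ ++ s₂).Nodup := by
      have := hnd
      simp only [List.nodup_append, List.nodup_cons] at this ⊢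
      exact ⟨this.1, this.2.1.2, fun a ha b hb => this.2.2 a ha b (List.mem_cons_of_mem x hb)⟩
    obtain ⟨n, hn⟩ := ih (s₁ ++ s₂) hnd2 hmul
    exact ⟨s₁.length + n, stepsTo_trans (stepsTo_move_front x s₁ s₂ hx1) (stepsTo_cons x hn)⟩

/-- insert `x` at position `p`. -/
def ins (x : ℤ) (p : ℕ) (l : List ℤ) : List ℤ := l.take p ++ x :: l.drop p

lemma psi_ins_gt {v w : ℤ} (hvw : v < w) (p : ℕ) (l : List ℤ) :
    psi v (ins w p l) = psi v l := by
  rw [ins, psi_middle hvw, List.take_append_drop]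

lemma psi_ins_self {w : ℤ} {l : List ℤ} (hw : ∀ x ∈ l, x < w) {p : ℕ} (hp : p ≤ l.length) :
    psi w (ins w p l) = l.length - p := by
  have hwl : w ∉ l := fun h => lt_irrefl w (hw w h)
  have h1 : w ∉ l.take p := fun h => hwl (List.mem_of_mem_take h)
  have h2 : w ∉ l.drop p := fun h => hwl (List.mem_of_mem_drop h)
  rw [ins, psi_append]
  rw [psi_eq_zero_of_not_mem h1, List.count_eq_zero_of_not_mem h1]
  have h3 : psi w (w :: l.drop p) = (l.drop p).length := by
    have e1 : psi w (w :: l.drop p)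
        = (l.drop p).countP (fun y => decide (y < w)) + psi w (l.drop p) := by
      simp [psi]
    rw [e1, psi_eq_zero_of_not_mem h2, add_zero, List.countP_eq_length.2]
    intro a ha
    exact decide_eq_true (hw a (List.mem_of_mem_drop ha))
  rw [h3, List.length_drop]
  simp

lemma ins_length (x : ℤ) (p : ℕ) (l : List ℤ) (hp : p ≤ l.length) :
    (ins x p l).length = l.length + 1 := by
  simp [ins]; omega

lemma ins_coe (x : ℤ) (p : ℕ) (l : List ℤ) :
    (↑(ins x p l) : Multiset ℤ) = x ::ₘ ↑l := by
  have : l.take p ++ l.drop p = l := List.take_append_drop p l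
  calc (↑(ins x p l) : Multiset ℤ) = ↑(l.take p) + (x ::ₘ ↑(l.drop p)) := by
        rw [ins, ← Multiset.coe_add, ← Multiset.cons_coe]
    _ = x ::ₘ (↑(l.take p) + ↑(l.drop p)) := by
        rw [Multiset.add_cons]
    _ = x ::ₘ ↑l := by rw [Multiset.coe_add, this]

lemma mem_rangeList {a len : ℕ} {x : ℤ} : x ∈ rangeList a len ↔ (a : ℤ) ≤ x ∧ x < a + len := by
  rw [rangeList_eq]
  simp only [List.mem_map, List.mem_range'_1]
  constructor
  · rintro ⟨y, ⟨hy1, hy2⟩, rfl⟩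
    constructor
    · exact_mod_cast hy1
    · exact_mod_cast hy2
  · rintro ⟨h1, h2⟩
    exact ⟨x.toNat, ⟨by omega, by omega⟩, by omega⟩

lemma rangeList_nodup (a len : ℕ) : (rangeList a len).Nodup := by
  rw [rangeList_eq]
  exact List.Nodup.map (fun u v h => by exact_mod_cast h) (List.nodup_range' (s := a) (n := len))

lemma rangeList_length (a len : ℕ) : (rangeList a len).length = len := by
  rw [rangeList_eq]; simp

lemma rangeList_concat (a len : ℕ) :
    rangeList a (len + 1) = rangeList a len ++ [((a + len : ℕ) : ℤ)] := by
  rw [rangeList_eq, rangeList_eq, List.range'_concat, List.map_append]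
  simp

lemma permList_mem {k : ℕ} {σ : List ℤ} (h : permList k σ) {x : ℤ} (hx : x ∈ σ) :
    1 ≤ x ∧ x ≤ (k : ℤ) := by
  have : x ∈ (↑σ : Multiset ℤ) := by simpa using hx
  rw [h] at this
  have := mem_rangeList.1 (by simpa using this)
  push_cast at this
  omega

lemma permList_nodup {k : ℕ} {σ : List ℤ} (h : permList k σ) : σ.Nodup := by
  have := rangeList_nodup 1 k
  rw [← Multiset.coe_nodup] at this ⊢
  rwa [h]

lemma permList_length {k : ℕ} {σ : List ℤ} (h : permList k σ) : σ.length = k := by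
  have : (↑σ : Multiset ℤ).card = (↑(rangeList 1 k) : Multiset ℤ).card := by rw [h]
  simpa [rangeList_length] using this

lemma psi_one_eq_zero {l : List ℤ} (h : ∀ x ∈ l, 1 ≤ x) : psi 1 l = 0 := by
  induction l with
  | nil => rfl
  | cons x xs ih =>
    have hx : psi 1 (x :: xs) = (if x = 1 then xs.countP (fun y => decide (y < 1)) else 0)
        + psi 1 xs := rfl
    rw [hx, ih (fun y hy => h y (List.mem_cons_of_mem x hy))]
    have : xs.countP (fun y => decide (y < 1)) = 0 := by
      rw [List.countP_eq_zero]
      intro a ha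
      simpa using not_lt.2 (h a (List.mem_cons_of_mem x ha))
    simp [this]

lemma psi_inj : ∀ (k : ℕ) (σ π : List ℤ), permList k σ → permList k π →
    (∀ i ∈ Finset.Icc (1:ℤ) (k:ℤ), psi i σ = psi i π) → σ = π := by
  intro k
  induction k with
  | zero =>
    intro σ π hσ hπ _
    have h1 : σ = [] := by
      rw [permList] at hσ
      simpa [rangeList, Multiset.coe_eq_zero] using hσ
    have h2 : π = [] := by
      rw [permList] at hπ
      simpa [rangeList, Multiset.coe_eq_zero] using hπ
    rw [h1, h2]
  | succ k ih =>
    intro σ π hσ hπ hpsi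
    set K : ℤ := ((k : ℤ) + 1) with hK
    have hKmem : ∀ {l : List ℤ}, permList (k+1) l → K ∈ l := by
      intro l hl
      have : K ∈ (↑l : Multiset ℤ) := by
        rw [hl]
        have : K ∈ rangeList 1 (k+1) := mem_rangeList.2 (by push_cast; omega)
        simpa using this
      simpa using this
    obtain ⟨s₁, s₂, hs⟩ := List.append_of_mem (hKmem hσ)
    obtain ⟨t₁, t₂, ht⟩ := List.append_of_mem (hKmem hπ)
    -- facts about elements
    have hmemσ := fun x hx => permList_mem hσ (x := x) hx
    have hmemπ := fun x hx => permList_mem hπ (x := x) hx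
    have hndσ := permList_nodup hσ
    have hndπ := permList_nodup hπ
    -- psi K computes length of the tail
    have key : ∀ (l u v : List ℤ), l = u ++ K :: v → l.Nodup →
        (∀ x ∈ l, 1 ≤ x ∧ x ≤ ((k:ℤ)+1)) → psi K l = v.length := by
      intro l u v hl hnd hmem
      subst hl
      have hKu : K ∉ u := by
        simp only [List.nodup_append, List.nodup_cons] at hnd
        intro hm; exact hnd.2.2 K hm K (by simp) rfl
      have hKv : K ∉ v := by
        simp only [List.nodup_append, List.nodup_cons] at hnd
        exact hnd.2.1.1
      rw [psi_append, psi_eq_zero_of_not_mem hKu, List.count_eq_zero_of_not_mem hKu]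
      have e1 : psi K (K :: v) = v.countP (fun y => decide (y < K)) + psi K v := by simp [psi]
      rw [e1, psi_eq_zero_of_not_mem hKv, add_zero]
      have hcv : List.countP (fun y => decide (y < K)) v = v.length := by
        rw [List.countP_eq_length]
        intro a ha
        have h1 := (hmem a (by simp [ha])).2
        have h2 : a ≠ K := fun h => hKv (h ▸ ha)
        simp only [decide_eq_true_eq]
        omega
      rw [hcv]
      simp
    have hlenσ : psi K σ = s₂.length := key σ s₁ s₂ hs hndσ hmemσ
    have hlenπ : psi K π = t₂.length := key π t₁ t₂ ht hndπ hmemπ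
    have hpsiK : psi K σ = psi K π := hpsi K (by simp only [Finset.mem_Icc, hK]; push_cast; omega)
    have hlen2 : s₂.length = t₂.length := by omega
    -- restricted lists are permutations of 1..k
    have hrest : ∀ (l u v : List ℤ), l = u ++ K :: v → permList (k+1) l →
        permList k (u ++ v) := by
      intro l u v hl hpl
      rw [permList] at hpl ⊢
      have e1 : (↑l : Multiset ℤ) = K ::ₘ ↑(u ++ v) := by
        rw [hl, ← Multiset.coe_add, ← Multiset.cons_coe, Multiset.add_cons, ← Multiset.coe_add]
      have e2 : (↑(rangeList 1 (k+1)) : Multiset ℤ) = K ::ₘ ↑(rangeList 1 k) := by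
        rw [rangeList_concat]
        rw [← Multiset.coe_add]
        have : ((1 + k : ℕ) : ℤ) = K := by push_cast [hK]; ring
        rw [this]
        rw [show (↑[K] : Multiset ℤ) = K ::ₘ 0 by rfl]
        rw [Multiset.add_cons, add_zero]
      rw [e1, e2] at hpl
      exact (Multiset.cons_inj_right K).mp hpl
    have hσ' := hrest σ s₁ s₂ hs hσ
    have hπ' := hrest π t₁ t₂ ht hπ
    have hpsi' : ∀ i ∈ Finset.Icc (1:ℤ) (k:ℤ), psi i (s₁ ++ s₂) = psi i (t₁ ++ t₂) := by
      intro i hi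
      simp only [Finset.mem_Icc] at hi
      have hiK : i < K := by omega
      have e1 : psi i σ = psi i (s₁ ++ s₂) := by rw [hs, psi_middle hiK]
      have e2 : psi i π = psi i (t₁ ++ t₂) := by rw [ht, psi_middle hiK]
      rw [← e1, ← e2]
      exact hpsi i (by simp only [Finset.mem_Icc]; push_cast; omega)
    have heq : s₁ ++ s₂ = t₁ ++ t₂ := ih (s₁ ++ s₂) (t₁ ++ t₂) hσ' hπ' hpsi'
    have hlen1 : s₁.length = t₁.length := by
      have l1 : s₁.length + s₂.length = t₁.length + t₂.length := by
        have := congrArg List.length heq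
        simpa using this
      omega
    obtain ⟨e1, e2⟩ := List.append_inj heq hlen1
    rw [hs, ht, e1, e2]

lemma arith_key (k : ℕ) (e : ℤ → ℤ) (h1 : e 1 = 0)
    (hd1 : 1 ≤ ∑ i ∈ Finset.Icc (1:ℤ) (k:ℤ), (e i).natAbs)
    (A B : ℕ)
    (hA : ¬ ((k:ℤ)+1) ∣ (∑ i ∈ Finset.Icc (1:ℤ) (k:ℤ), e i) → 1 ≤ A)
    (hB : ¬ ((k:ℤ)+2) ∣ (∑ i ∈ Finset.Icc (1:ℤ) (k:ℤ), i * e i) → 1 ≤ B) :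
    3 ≤ (∑ i ∈ Finset.Icc (1:ℤ) (k:ℤ), (e i).natAbs) + A + B := by
  set T := Finset.Icc (1:ℤ) (k:ℤ) with hT
  set d := ∑ i ∈ T, (e i).natAbs with hdd
  by_cases hd3 : 3 ≤ d
  · omega
  -- support
  set s := T.filter (fun i => e i ≠ 0) with hss
  have hsum_d : ∑ i ∈ s, (e i).natAbs = d := by
    apply Finset.sum_filter_of_ne
    intro x _ h h0
    exact h (by simp [h0])
  have hsum_e : ∑ i ∈ s, e i = ∑ i ∈ T, e i := by
    apply Finset.sum_filter_of_ne
    intro x _ h h0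
    exact h h0
  have hsum_ie : ∑ i ∈ s, i * e i = ∑ i ∈ T, i * e i := by
    apply Finset.sum_filter_of_ne
    intro x _ h h0
    exact h (by simp [h0])
  have hmem_s : ∀ j ∈ s, (2:ℤ) ≤ j ∧ j ≤ (k:ℤ) ∧ e j ≠ 0 := by
    intro j hj
    simp only [hss, Finset.mem_filter, hT, Finset.mem_Icc] at hj
    refine ⟨?_, hj.1.2, hj.2⟩
    rcases eq_or_lt_of_le hj.1.1 with h | h
    · exact absurd h1 (by rw [h]; exact hj.2)
    · omega
  have hcard_le : s.card ≤ d := by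
    rw [← hsum_d]
    calc s.card = ∑ _i ∈ s, 1 := by simp
      _ ≤ ∑ i ∈ s, (e i).natAbs := by
        apply Finset.sum_le_sum
        intro i hi
        have := (hmem_s i hi).2.2
        omega
  have hs_ne : s.Nonempty := by
    rw [← Finset.card_pos]
    by_contra h
    push_neg at h
    interval_cases hc : s.card
    · rw [Finset.card_eq_zero] at hc
      rw [hc] at hsum_d
      simp at hsum_d
      omega
  obtain ⟨j₀, hj₀⟩ := hs_ne
  have hk2 : (2:ℤ) ≤ (k:ℤ) := le_trans (hmem_s j₀ hj₀).1 (hmem_s j₀ hj₀).2.1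
  have habs_sum : |∑ i ∈ s, e i| ≤ (d:ℤ) := by
    calc |∑ i ∈ s, e i| ≤ ∑ i ∈ s, |e i| := Finset.abs_sum_le_sum_abs _ _
      _ = (d:ℤ) := by
        rw [← hsum_d]
        push_cast
        rfl
  -- main dichotomy
  have claim : d ≤ 2 → (¬ ((k:ℤ)+1) ∣ (∑ i ∈ T, e i)) ∨ (¬ ((k:ℤ)+2) ∣ (∑ i ∈ T, i * e i)) := by
    intro hd2
    by_contra hcon
    push_neg at hcon
    obtain ⟨hdv1, hdv2⟩ := hcon
    have hsz : ∑ i ∈ s, e i = 0 := by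
      by_contra hne
      have h0 : (0:ℤ) < |∑ i ∈ s, e i| := abs_pos.2 hne
      have := Int.le_of_dvd h0 ((dvd_abs _ _).mpr (hsum_e ▸ hdv1))
      omega
    have hcard2 : s.card ≤ 2 := le_trans hcard_le hd2
    have hcard1 : 1 ≤ s.card := Finset.card_pos.2 ⟨j₀, hj₀⟩
    interval_cases hc : s.card
    · -- singleton support
      obtain ⟨j, hj⟩ := Finset.card_eq_one.mp hc
      rw [hj, Finset.sum_singleton] at hsz
      exact (hmem_s j (by rw [hj]; simp)).2.2 hsz
    · -- two-element support
      obtain ⟨j, m, hjm, hj2⟩ := Finset.card_eq_two.mp hc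
      have hjs : j ∈ s := by rw [hj2]; simp
      have hms : m ∈ s := by rw [hj2]; simp
      have hsum2 : e j + e m = 0 := by
        rw [hj2, Finset.sum_pair hjm] at hsz; exact hsz
      have hnatd : (e j).natAbs + (e m).natAbs ≤ 2 := by
        rw [hj2, Finset.sum_pair hjm] at hsum_d
        omega
      have hej : (e j).natAbs = 1 := by
        have h1' := (hmem_s j hjs).2.2
        have h2' := (hmem_s m hms).2.2
        have : 1 ≤ (e j).natAbs := by omega
        have : 1 ≤ (e m).natAbs := by omega
        omega
      have hie : ∑ i ∈ s, i * e i = (j - m) * e j := by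
        rw [hj2, Finset.sum_pair hjm]
        have : e m = - e j := by omega
        rw [this]; ring
      have hne0 : (j - m) * e j ≠ 0 :=
        mul_ne_zero (sub_ne_zero.2 hjm) (hmem_s j hjs).2.2
      have hdvd : ((k:ℤ)+2) ∣ (j - m) * e j := by
        rw [← hie, hsum_ie]; exact hdv2
      have hlow := Int.le_of_dvd (abs_pos.2 hne0) ((dvd_abs _ _).mpr hdvd)
      have habs : |(j - m) * e j| = |j - m| := by
        rw [abs_mul, Int.abs_eq_natAbs (e j), hej]
        simp
      have hjk := hmem_s j hjs
      have hmk := hmem_s m hms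
      have : |j - m| ≤ (k:ℤ) - 2 := by
        rw [abs_sub_le_iff]
        omega
      omega
  by_cases hd2 : d = 2
  · rcases claim (by omega) with h | h
    · have := hA h; omega
    · have := hB h; omega
  · -- d = 1
    have hd1' : d = 1 := by omega
    have hcard1 : s.card = 1 := by
      have := Finset.card_pos.2 ⟨j₀, hj₀⟩
      omega
    obtain ⟨j, hj⟩ := Finset.card_eq_one.mp hcard1
    have hjs : j ∈ s := by rw [hj]; simp
    have hej : (e j).natAbs = 1 := by
      rw [hj, Finset.sum_singleton] at hsum_d
      omega
    have hA1 : 1 ≤ A := by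
      apply hA
      intro hdv
      rw [← hsum_e, hj, Finset.sum_singleton] at hdv
      have := Int.le_of_dvd (abs_pos.2 (hmem_s j hjs).2.2) ((dvd_abs _ _).mpr hdv)
      have : |e j| = 1 := by rw [Int.abs_eq_natAbs, hej]; rfl
      omega
    have hB1 : 1 ≤ B := by
      apply hB
      intro hdv
      rw [← hsum_ie, hj, Finset.sum_singleton] at hdv
      have hne0 : j * e j ≠ 0 := mul_ne_zero (by have := (hmem_s j hjs).1; omega) (hmem_s j hjs).2.2
      have hlow := Int.le_of_dvd (abs_pos.2 hne0) ((dvd_abs _ _).mpr hdv)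
      have habs : |j * e j| = |j| := by
        rw [abs_mul, Int.abs_eq_natAbs (e j), hej]; simp
      have hjk := hmem_s j hjs
      have : |j| ≤ (k:ℤ) := by rw [abs_of_pos (by omega : (0:ℤ) < j)]; exact hjk.2.1
      omega
    omega

noncomputable def S1 (k : ℕ) (σ : List ℤ) : ℕ := ∑ i ∈ Finset.Icc (1:ℤ) (k:ℤ), psi i σ
noncomputable def S2 (k : ℕ) (σ : List ℤ) : ℕ := ∑ i ∈ Finset.Icc (1:ℤ) (k:ℤ), i.toNat * psi i σ
noncomputable def aC (k : ℕ) (σ : List ℤ) : ℕ := S1 k σ % (k+1)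
noncomputable def bC (k : ℕ) (σ : List ℤ) : ℕ := S2 k σ % (k+2)

/-- the codeword associated to `σ`. -/
noncomputable def cw (k : ℕ) (σ : List ℤ) : List ℤ :=
  ins ((k:ℤ)+2) (k+1 - bC k σ) (ins ((k:ℤ)+1) (k - aC k σ) σ)

lemma aC_le (k : ℕ) (σ : List ℤ) : aC k σ ≤ k :=
  Nat.lt_succ_iff.mp (Nat.mod_lt _ (Nat.succ_pos k))

lemma bC_le (k : ℕ) (σ : List ℤ) : bC k σ ≤ k + 1 :=
  Nat.lt_succ_iff.mp (Nat.mod_lt _ (by omega))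

lemma cw_coe {k : ℕ} {σ : List ℤ} :
    (↑(cw k σ) : Multiset ℤ) = ((k:ℤ)+2) ::ₘ ((k:ℤ)+1) ::ₘ (↑σ : Multiset ℤ) := by
  rw [cw, ins_coe, ins_coe]

lemma cw_perm {k : ℕ} {σ : List ℤ} (h : permList k σ) : permList (k+2) (cw k σ) := by
  rw [permList, cw_coe, h]
  have e1 : rangeList 1 (k+2) = (rangeList 1 k ++ [((1+k : ℕ) : ℤ)]) ++ [((1+(k+1) : ℕ) : ℤ)] := by
    rw [← rangeList_concat, ← rangeList_concat]
  rw [e1]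
  simp only [← Multiset.coe_add]
  have c1 : ((1+k : ℕ) : ℤ) = (k:ℤ)+1 := by push_cast; ring
  have c2 : ((1+(k+1) : ℕ) : ℤ) = (k:ℤ)+2 := by push_cast; ring
  rw [c1, c2]
  have s1 : (↑[((k:ℤ)+1)] : Multiset ℤ) = {((k:ℤ)+1)} := rfl
  have s2 : (↑[((k:ℤ)+2)] : Multiset ℤ) = {((k:ℤ)+2)} := rfl
  rw [s1, s2, ← Multiset.singleton_add, ← Multiset.singleton_add]
  abel

lemma mem_ins {x w : ℤ} {p : ℕ} {l : List ℤ} (h : x ∈ ins w p l) : x = w ∨ x ∈ l := by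
  have : x ∈ (↑(ins w p l) : Multiset ℤ) := by simpa using h
  rw [ins_coe] at this
  simpa using this

lemma restrict_ins {w : ℤ} {k p : ℕ} {l : List ℤ} (hw : ¬ (w ≤ (k:ℤ))) :
    restrictTo k (ins w p l) = restrictTo k l := by
  rw [restrictTo, restrictTo, ins, List.filter_append]
  have : List.filter (fun x => decide (x ≤ (k:ℤ))) (w :: l.drop p)
      = List.filter (fun x => decide (x ≤ (k:ℤ))) (l.drop p) := by
    rw [List.filter_cons]
    simp [hw]
  rw [this, ← List.filter_append, List.take_append_drop]

lemma restrict_cw {k : ℕ} {σ : List ℤ} (h : permList k σ) : restrictTo k (cw k σ) = σ := by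
  rw [cw, restrict_ins (by omega), restrict_ins (by omega)]
  rw [restrictTo, List.filter_eq_self]
  intro a ha
  exact decide_eq_true (permList_mem h ha).2

lemma psi_cw_low {k : ℕ} {σ : List ℤ} {v : ℤ} (hv : v ≤ (k:ℤ)) :
    psi v (cw k σ) = psi v σ := by
  rw [cw, psi_ins_gt (by omega), psi_ins_gt (by omega)]

lemma psi_cw_k1 {k : ℕ} {σ : List ℤ} (h : permList k σ) :
    psi ((k:ℤ)+1) (cw k σ) = aC k σ := by
  rw [cw, psi_ins_gt (by omega)]
  rw [psi_ins_self (fun x hx => by have := (permList_mem h hx).2; omega)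
    (by rw [permList_length h]; omega)]
  rw [permList_length h]
  have := aC_le k σ
  omega

lemma psi_cw_k2 {k : ℕ} {σ : List ℤ} (h : permList k σ) :
    psi ((k:ℤ)+2) (cw k σ) = bC k σ := by
  rw [cw]
  have hlen : (ins ((k:ℤ)+1) (k - aC k σ) σ).length = k + 1 := by
    rw [ins_length _ _ _ (by rw [permList_length h]; omega), permList_length h]
  rw [psi_ins_self (fun x hx => ?_) (by rw [hlen]; omega)]
  · rw [hlen]
    have := bC_le k σ
    omega
  · rcases mem_ins hx with rfl | hx'
    · omega
    · have := (permList_mem h hx').2; omega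

lemma Icc_split (k : ℕ) :
    Finset.Icc (1:ℤ) ((k:ℤ)+2)
      = insert ((k:ℤ)+2) (insert ((k:ℤ)+1) (Finset.Icc (1:ℤ) (k:ℤ))) := by
  ext x
  simp only [Finset.mem_Icc, Finset.mem_insert]
  omega

lemma cw_phi {k : ℕ} {σ π : List ℤ} (hσ : permList k σ) (hπ : permList k π) (hne : σ ≠ π) :
    3 ≤ ∑ v ∈ Finset.Icc (1:ℤ) ((k:ℤ)+2),
      ((psi v (cw k σ) : ℤ) - (psi v (cw k π) : ℤ)).natAbs := by
  rw [Icc_split, Finset.sum_insert (by simp only [Finset.mem_insert, Finset.mem_Icc]; omega),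
    Finset.sum_insert (by simp only [Finset.mem_Icc]; omega)]
  rw [psi_cw_k1 hσ, psi_cw_k1 hπ, psi_cw_k2 hσ, psi_cw_k2 hπ]
  have hlow : ∑ v ∈ Finset.Icc (1:ℤ) (k:ℤ), ((psi v (cw k σ) : ℤ) - (psi v (cw k π) : ℤ)).natAbs
      = ∑ v ∈ Finset.Icc (1:ℤ) (k:ℤ), ((psi v σ : ℤ) - (psi v π : ℤ)).natAbs := by
    apply Finset.sum_congr rfl
    intro v hv
    simp only [Finset.mem_Icc] at hv
    rw [psi_cw_low hv.2, psi_cw_low hv.2]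
  rw [hlow]
  -- apply the arithmetic key lemma
  set e : ℤ → ℤ := fun i => (psi i σ : ℤ) - (psi i π : ℤ) with he
  have h1 : e 1 = 0 := by
    rw [he]
    simp only
    rw [psi_one_eq_zero (fun x hx => (permList_mem hσ hx).1),
      psi_one_eq_zero (fun x hx => (permList_mem hπ hx).1)]
    ring
  have hd1 : 1 ≤ ∑ i ∈ Finset.Icc (1:ℤ) (k:ℤ), (e i).natAbs := by
    by_contra hcon
    push_neg at hcon
    have hz : ∑ i ∈ Finset.Icc (1:ℤ) (k:ℤ), (e i).natAbs = 0 := by omega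
    rw [Finset.sum_eq_zero_iff] at hz
    apply hne
    apply psi_inj k σ π hσ hπ
    intro i hi
    have := hz i hi
    simp only [he, Int.natAbs_eq_zero, sub_eq_zero] at this
    exact_mod_cast this
  have hsum1 : ∑ i ∈ Finset.Icc (1:ℤ) (k:ℤ), e i = ((S1 k σ : ℤ) - (S1 k π : ℤ)) := by
    rw [Finset.sum_sub_distrib, S1, S1]
    push_cast
    rfl
  have hsum2 : ∑ i ∈ Finset.Icc (1:ℤ) (k:ℤ), i * e i = ((S2 k σ : ℤ) - (S2 k π : ℤ)) := by
    have : ∀ ρ : List ℤ, ((S2 k ρ : ℤ)) = ∑ i ∈ Finset.Icc (1:ℤ) (k:ℤ), i * (psi i ρ : ℤ) := by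
      intro ρ
      rw [S2]
      push_cast
      apply Finset.sum_congr rfl
      intro i hi
      simp only [Finset.mem_Icc] at hi
      rw [Int.toNat_of_nonneg (by omega)]
    rw [this σ, this π, ← Finset.sum_sub_distrib]
    apply Finset.sum_congr rfl
    intro i _
    rw [he]
    ring
  have hA : ¬ ((k:ℤ)+1) ∣ (∑ i ∈ Finset.Icc (1:ℤ) (k:ℤ), e i) →
      1 ≤ ((aC k σ : ℤ) - (aC k π : ℤ)).natAbs := by
    intro hnd
    rcases Nat.eq_or_lt_of_le (Nat.zero_le ((aC k σ : ℤ) - (aC k π : ℤ)).natAbs) with h | h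
    · exfalso
      apply hnd
      have : aC k σ = aC k π := by
        have := h.symm
        rw [Int.natAbs_eq_zero, sub_eq_zero] at this
        exact_mod_cast this
      have hmod : S1 k σ ≡ S1 k π [MOD k+1] := this
      have := hmod.dvd
      rw [hsum1]
      have hc : ((k+1 : ℕ) : ℤ) = (k:ℤ)+1 := by push_cast; ring
      rw [← hc]
      exact (dvd_sub_comm.mp this)
    · omega
  have hB : ¬ ((k:ℤ)+2) ∣ (∑ i ∈ Finset.Icc (1:ℤ) (k:ℤ), i * e i) →
      1 ≤ ((bC k σ : ℤ) - (bC k π : ℤ)).natAbs := by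
    intro hnd
    rcases Nat.eq_or_lt_of_le (Nat.zero_le ((bC k σ : ℤ) - (bC k π : ℤ)).natAbs) with h | h
    · exfalso
      apply hnd
      have : bC k σ = bC k π := by
        have := h.symm
        rw [Int.natAbs_eq_zero, sub_eq_zero] at this
        exact_mod_cast this
      have hmod : S2 k σ ≡ S2 k π [MOD k+2] := this
      have := hmod.dvd
      rw [hsum2]
      have hc : ((k+2 : ℕ) : ℤ) = (k:ℤ)+2 := by push_cast; ring
      rw [← hc]
      exact (dvd_sub_comm.mp this)
    · omega
  have := arith_key k e h1 hd1 _ _ hA hB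
  have hg : ∑ v ∈ Finset.Icc (1:ℤ) (k:ℤ), ((psi v σ : ℤ) - (psi v π : ℤ)).natAbs
      = ∑ i ∈ Finset.Icc (1:ℤ) (k:ℤ), (e i).natAbs := rfl
  omega

lemma cw_dist {k : ℕ} {σ π : List ℤ} (hσ : permList k σ) (hπ : permList k π) (hne : σ ≠ π) :
    3 ≤ dK (cw k σ) (cw k π) := by
  have hex : ∃ n, StepsTo n (cw k σ) (cw k π) := by
    apply exists_stepsTo
    · exact permList_nodup (cw_perm hσ)
    · rw [cw_perm hσ, cw_perm hπ]
  apply le_csInf hex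
  intro n hn
  have hb := stepsTo_psi_sum (Finset.Icc (1:ℤ) ((k:ℤ)+2)) n _ _ hn
  have := cw_phi hσ hπ hne
  omega


/-- Example 3. For every integer `k ≥ 1` there exists a `(k+2, k)`
systematic single-error-correcting code: a code `C ⊆ S_{k+2}` of size `k!` such that every
`σ ∈ S_k` is the restriction of exactly one codeword of `C`, and distinct codewords of `C`
are at Kendall τ-distance at least `3`. -/
theorem stmt15 (k : ℕ) (hk : 1 ≤ k) :
    ∃ C : Set (List ℤ),
      (∀ α ∈ C, permList (k + 2) α) ∧
      C.ncard = Nat.factorial k ∧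
      (∀ σ : List ℤ, permList k σ → ∃! α, α ∈ C ∧ restrictTo k α = σ) ∧
      (∀ α ∈ C, ∀ β ∈ C, α ≠ β → 3 ≤ dK α β) := by
  refine ⟨cw k '' {σ | permList k σ}, ?_, ?_, ?_, ?_⟩
  · rintro α ⟨σ, hσ, rfl⟩
    exact cw_perm hσ
  · rw [Set.ncard_image_of_injOn]
    · have hset : {σ : List ℤ | permList k σ} = ↑((rangeList 1 k).permutations.toFinset) := by
        ext l
        simp only [Set.mem_setOf_eq, permList, Finset.coe_sort_coe, Set.mem_setOf_eq,
          Finset.mem_coe, List.mem_toFinset, List.mem_permutations, Multiset.coe_eq_coe]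
      rw [hset, Set.ncard_coe_finset,
        List.toFinset_card_of_nodup (List.nodup_permutations _ (rangeList_nodup 1 k)),
        List.length_permutations, rangeList_length]
    · intro σ hσ π hπ h
      have hσ' : permList k σ := hσ
      have hπ' : permList k π := hπ
      have := restrict_cw hσ'
      rw [h, restrict_cw hπ'] at this
      exact this.symm
  · intro σ hσ
    refine ⟨cw k σ, ⟨⟨σ, hσ, rfl⟩, restrict_cw hσ⟩, ?_⟩
    rintro α ⟨⟨π, hπ, rfl⟩, hres⟩
    rw [restrict_cw hπ] at hres
    rw [hres]
  · rintro α ⟨σ, hσ, rfl⟩ β ⟨π, hπ, rfl⟩ hne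
    apply cw_dist hσ hπ
    intro h
    exact hne (by rw [h])
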